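/- Let t₁, t₂, t₃, t₄ be positive integers and define, for each nonempty subset J of {1,2,3,4}, the relative greatest common divisors x_J recursively by x_{1,2,3,4} = gcd(t₁,t₂,t₃,t₄) and x_J = gcd(tᵢ : i ∈ J) / ∏_{J ⊊ K} x_K. Then for all J, K ⊆ {1,2,3,4} with J ⊄ K and K ⊄ J, gcd(x_J, x_K) = 1. -/

import Mathlib

theorem stmt_9 (t : Fin 4 → ℕ) (ht : ∀ i, 0 < t i)
    (x : Finset (Fin 4) → ℕ) (hx : ∀ J : Finset (Fin 4), 0 < x J)
    (hrec : ∀ J : Finset (Fin 4), J.Nonempty →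
      x J * ∏ K ∈ Finset.univ.powerset.filter (fun K => J ⊂ K), x K = J.gcd t)
    (J K : Finset (Fin 4)) (hJ : J.Nonempty) (hK : K.Nonempty)
    (hJK : ¬ J ⊆ K) (hKJ : ¬ K ⊆ J) :
    Nat.gcd (x J) (x K) = 1 := by
  set M := J ∪ K with hMdef
  have hMne : M.Nonempty := hJ.mono Finset.subset_union_left
  have hsplit : ∀ S : Finset (Fin 4),
      Finset.univ.powerset.filter (fun L => S ⊆ L)
        = insert S (Finset.univ.powerset.filter (fun L => S ⊂ L)) := by
    intro S
    ext L
    simp only [Finset.mem_insert, Finset.mem_filter, Finset.mem_powerset,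
      Finset.subset_univ, true_and, Finset.ssubset_iff_subset_ne]
    constructor
    · intro h
      by_cases hLS : L = S
      · exact Or.inl hLS
      · exact Or.inr ⟨h, fun he => hLS he.symm⟩
    · rintro (rfl | ⟨h, _⟩) <;> [exact Finset.Subset.refl _; exact h]
  have key : ∀ S : Finset (Fin 4), S.Nonempty →
      ∏ L ∈ Finset.univ.powerset.filter (fun L => S ⊆ L), x L = S.gcd t := by
    intro S hS
    rw [hsplit S, Finset.prod_insert (by simp [Finset.ssubset_iff_subset_ne]), hrec S hS]
  have hJM : J ⊂ M := by
    refine Finset.ssubset_iff_subset_ne.mpr ⟨Finset.subset_union_left, ?_⟩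
    intro h
    exact hKJ (h ▸ Finset.subset_union_right)
  have hKM : K ⊂ M := by
    refine Finset.ssubset_iff_subset_ne.mpr ⟨Finset.subset_union_right, ?_⟩
    intro h
    exact hJK (h ▸ Finset.subset_union_left)
  have hdvd : ∀ S : Finset (Fin 4), S.Nonempty → S ⊂ M → x S * M.gcd t ∣ S.gcd t := by
    intro S hS hSM
    rw [← key S hS, ← key M hMne, hsplit S, Finset.prod_insert (by simp [Finset.ssubset_iff_subset_ne])]
    refine mul_dvd_mul_left (x S) ?_
    refine Finset.prod_dvd_prod_of_subset _ _ x ?_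
    refine Finset.monotone_filter_right _ ?_
    intro L _ hML
    exact lt_of_lt_of_le hSM hML
  have hgM : 0 < M.gcd t := by
    rcases hMne with ⟨i, hi⟩
    rcases Nat.eq_zero_or_pos (M.gcd t) with h0 | h
    · have := Finset.gcd_dvd (f := t) hi
      rw [h0] at this
      exact absurd (Nat.eq_zero_of_zero_dvd this) (Nat.pos_iff_ne_zero.mp (ht i))
    · exact h
  have h1 : Nat.gcd (x J) (x K) * M.gcd t ∣ M.gcd t := by
    apply Finset.dvd_gcd
    intro i hi
    rcases Finset.mem_union.mp hi with h | h
    · exact ((mul_dvd_mul_right (Nat.gcd_dvd_left _ _) _).trans (hdvd J hJ hJM)).trans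
        (Finset.gcd_dvd h)
    · exact ((mul_dvd_mul_right (Nat.gcd_dvd_right _ _) _).trans (hdvd K hK hKM)).trans
        (Finset.gcd_dvd h)
  have hle : Nat.gcd (x J) (x K) * M.gcd t ≤ 1 * M.gcd t := by
    rw [one_mul]
    exact Nat.le_of_dvd hgM h1
  have hle1 : Nat.gcd (x J) (x K) ≤ 1 := Nat.le_of_mul_le_mul_right hle hgM
  have hpos : 0 < Nat.gcd (x J) (x K) := Nat.gcd_pos_of_pos_left _ (hx J)
  omega
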